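/- Let G > H > K be finite groups with the normal closure of K in G contained in H, and let A, B, C be the respective group algebras over a commutative ring k. Then the tower A/B/C is right depth three: A ⊗_B A ∼ A as (A, C)-bimodules. -/

import Mathlib

open scoped TensorProduct

noncomputable section

section Bimod

variable (L R : Type) [Ring L] [Ring R]

def BDiv {M N : Type} [AddCommGroup M] [AddCommGroup N]
    (lM : L → M → M) (rM : M → R → M) (lN : L → N → N) (rN : N → R → N) : Prop :=
  ∃ (n : ℕ) (f : M →+ (Fin n → N)) (g : (Fin n → N) →+ M),
    (∀ (l : L) (m : M), f (lM l m) = fun i => lN l (f m i)) ∧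
    (∀ (m : M) (r : R), f (rM m r) = fun i => rN (f m i) r) ∧
    (∀ (l : L) (v : Fin n → N), g (fun i => lN l (v i)) = lM l (g v)) ∧
    (∀ (v : Fin n → N) (r : R), g (fun i => rN (v i) r) = rM (g v) r) ∧
    ∀ m : M, g (f m) = m

def BSim {M N : Type} [AddCommGroup M] [AddCommGroup N]
    (lM : L → M → M) (rM : M → R → M) (lN : L → N → N) (rN : N → R → N) : Prop :=
  BDiv L R lM rM lN rN ∧ BDiv L R lN rN lM rM

end Bimod

section Ext

variable {R S : Type} [Ring R] [Ring S] (ψ : R →+* S)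

def rdualSub : AddSubgroup (S →+ R) where
  carrier := {h | ∀ (x : S) (r : R), h (x * ψ r) = h x * r}
  add_mem' := by
    intro a b ha hb
    intro x r
    simp only [AddMonoidHom.add_apply, ha x r, hb x r, add_mul]
  zero_mem' := by intro x r; simp
  neg_mem' := by
    intro a ha x r
    simp only [AddMonoidHom.neg_apply, ha x r, neg_mul]

def ldualSub : AddSubgroup (S →+ R) where
  carrier := {h | ∀ (r : R) (x : S), h (ψ r * x) = r * h x}
  add_mem' := by
    intro a b ha hb r x
    simp only [AddMonoidHom.add_apply, ha r x, hb r x, mul_add]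
  zero_mem' := by intro r x; simp
  neg_mem' := by
    intro a ha r x
    simp only [AddMonoidHom.neg_apply, ha r x, mul_neg]

def rdualL (r : R) (h : rdualSub ψ) : rdualSub ψ :=
  ⟨(AddMonoidHom.mulLeft r).comp h.1, by
    intro x r'
    simp only [AddMonoidHom.coe_comp, Function.comp_apply, AddMonoidHom.coe_mulLeft,
      h.2 x r', mul_assoc]⟩

def rdualR (h : rdualSub ψ) (s : S) : rdualSub ψ :=
  ⟨h.1.comp (AddMonoidHom.mulLeft s), by
    intro x r'
    simp only [AddMonoidHom.coe_comp, Function.comp_apply, AddMonoidHom.coe_mulLeft,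
      ← mul_assoc]
    exact h.2 (s * x) r'⟩

def ldualL (s : S) (h : ldualSub ψ) : ldualSub ψ :=
  ⟨h.1.comp (AddMonoidHom.mulRight s), by
    intro r x
    simp only [AddMonoidHom.coe_comp, Function.comp_apply, AddMonoidHom.coe_mulRight,
      mul_assoc]
    exact h.2 r (x * s)⟩

def ldualR (h : ldualSub ψ) (r : R) : ldualSub ψ :=
  ⟨(AddMonoidHom.mulRight r).comp h.1, by
    intro r' x
    simp only [AddMonoidHom.coe_comp, Function.comp_apply, AddMonoidHom.coe_mulRight,
      h.2 r' x, mul_assoc]⟩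

def tensorRel : AddSubgroup (S ⊗[ℤ] S) :=
  AddSubgroup.closure {z | ∃ (x y : S) (r : R),
    z = (x * ψ r) ⊗ₜ[ℤ] y - x ⊗ₜ[ℤ] (ψ r * y)}

def TensorSq := (S ⊗[ℤ] S) ⧸ tensorRel ψ

instance : AddCommGroup (TensorSq ψ) := QuotientAddGroup.Quotient.addCommGroup _

def tmk (x y : S) : TensorSq ψ := QuotientAddGroup.mk (x ⊗ₜ[ℤ] y)

def tL (a : S) : TensorSq ψ →+ TensorSq ψ :=
  QuotientAddGroup.map _ _
    ((TensorProduct.map (AddMonoidHom.mulLeft a).toIntLinearMap LinearMap.id).toAddMonoidHom)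
    (by
      show tensorRel ψ ≤ AddSubgroup.comap _ (tensorRel ψ)
      rw [tensorRel, AddSubgroup.closure_le]
      rintro z ⟨x, y, r, rfl⟩
      simp only [SetLike.mem_coe, AddSubgroup.mem_comap, LinearMap.toAddMonoidHom_coe,
        map_sub, TensorProduct.map_tmul, AddMonoidHom.coe_toIntLinearMap,
        AddMonoidHom.coe_mulLeft, LinearMap.id_coe, id_eq]
      exact AddSubgroup.subset_closure ⟨a * x, y, r, by rw [mul_assoc]⟩)

def tR (a : S) : TensorSq ψ →+ TensorSq ψ :=
  QuotientAddGroup.map _ _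
    ((TensorProduct.map LinearMap.id (AddMonoidHom.mulRight a).toIntLinearMap).toAddMonoidHom)
    (by
      show tensorRel ψ ≤ AddSubgroup.comap _ (tensorRel ψ)
      rw [tensorRel, AddSubgroup.closure_le]
      rintro z ⟨x, y, r, rfl⟩
      simp only [SetLike.mem_coe, AddSubgroup.mem_comap, LinearMap.toAddMonoidHom_coe,
        map_sub, TensorProduct.map_tmul, AddMonoidHom.coe_toIntLinearMap,
        AddMonoidHom.coe_mulRight, LinearMap.id_coe, id_eq]
      exact AddSubgroup.subset_closure ⟨x, y * a, r, by rw [mul_assoc]⟩)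

/-- The multiplication map `S ⊗_R S → S`, `x ⊗ y ↦ x * y`. -/
def tmul' : TensorSq ψ →+ S :=
  QuotientAddGroup.lift _ (LinearMap.mul' ℤ S).toAddMonoidHom
    (by
      intro z hz
      induction hz using AddSubgroup.closure_induction with
      | mem z hz =>
        obtain ⟨x, y, r, rfl⟩ := hz
        simp [mul_assoc]
      | zero => simp
      | add a b _ _ ha hb =>
        simp only [AddMonoidHom.mem_ker, LinearMap.toAddMonoidHom_coe] at ha hb ⊢
        simp [map_add, ha, hb]
      | neg a _ ha =>
        simp only [AddMonoidHom.mem_ker, LinearMap.toAddMonoidHom_coe] at ha ⊢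
        simp [ha])

end Ext


section ExtEnd

variable {R S : Type} [Ring R] [Ring S] (ψ : R →+* S)

/-- `End(S_R)`: additive endomorphisms of `S` commuting with the right `R`-action
(along `ψ`), as a subring of `AddMonoid.End S`. -/
def endR : Subring (AddMonoid.End S) where
  carrier := {e | ∀ (x : S) (r : R), e (x * ψ r) = e x * ψ r}
  mul_mem' := by
    intro a b ha hb x r
    show a (b (x * ψ r)) = a (b x) * ψ r
    rw [hb, ha]
  one_mem' := by intro x r; rfl
  add_mem' := by
    intro a b ha hb x r
    show a (x * ψ r) + b (x * ψ r) = (a x + b x) * ψ r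
    rw [ha, hb, add_mul]
  zero_mem' := by
    intro x r
    show (0 : S) = 0 * ψ r
    rw [zero_mul]
  neg_mem' := by
    intro a ha x r
    show -(a (x * ψ r)) = -(a x) * ψ r
    rw [ha, neg_mul]

/-- `End(_RS)`: additive endomorphisms of `S` commuting with the left `R`-action
(along `ψ`), as a subring of `AddMonoid.End S`. -/
def endL : Subring (AddMonoid.End S) where
  carrier := {e | ∀ (r : R) (x : S), e (ψ r * x) = ψ r * e x}
  mul_mem' := by
    intro a b ha hb r x
    show a (b (ψ r * x)) = ψ r * a (b x)
    rw [hb, ha]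
  one_mem' := by intro r x; rfl
  add_mem' := by
    intro a b ha hb r x
    show a (ψ r * x) + b (ψ r * x) = ψ r * (a x + b x)
    rw [ha, hb, mul_add]
  zero_mem' := by
    intro r x
    show (0 : S) = ψ r * 0
    rw [mul_zero]
  neg_mem' := by
    intro a ha r x
    show -(a (ψ r * x)) = ψ r * -(a x)
    rw [ha, mul_neg]

/-- The left regular representation `λ : S → End(S_R)`, `s ↦ (x ↦ s * x)`. -/
def lam : S →+* endR ψ where
  toFun s := ⟨(AddMonoidHom.mulLeft s : S →+ S), by
    intro x r
    show s * (x * ψ r) = s * x * ψ r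
    rw [mul_assoc]⟩
  map_one' := by
    apply Subtype.ext
    refine AddMonoidHom.ext fun x => ?_
    show (1 : S) * x = x
    rw [one_mul]
  map_mul' s t := by
    apply Subtype.ext
    refine AddMonoidHom.ext fun x => ?_
    show (s * t) * x = s * (t * x)
    rw [mul_assoc]
  map_zero' := by
    apply Subtype.ext
    refine AddMonoidHom.ext fun x => ?_
    show (0 : S) * x = 0
    rw [zero_mul]
  map_add' s t := by
    apply Subtype.ext
    refine AddMonoidHom.ext fun x => ?_
    show (s + t) * x = s * x + t * x
    rw [add_mul]

/-- Right multiplication `ρ : S → End(_RS)`, `s ↦ (x ↦ x * s)`. -/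
def rho (s : S) : endL ψ :=
  ⟨(AddMonoidHom.mulRight s : S →+ S), by
    intro r x
    show (ψ r * x) * s = ψ r * (x * s)
    rw [mul_assoc]⟩

/-- Left `S`-action on `End(_RS)`: `(x · f)(z) = f (z * x)`. -/
def endLL (x : S) (f : endL ψ) : endL ψ :=
  ⟨(f.1 : S →+ S).comp (AddMonoidHom.mulRight x), by
    intro r z
    show (f.1 : S →+ S) ((ψ r * z) * x) = ψ r * (f.1 : S →+ S) (z * x)
    rw [mul_assoc]
    exact f.2 r (z * x)⟩

/-- Right `S`-action on `End(_RS)`: `(f · y)(z) = f z * y`. -/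
def endLR (f : endL ψ) (y : S) : endL ψ :=
  ⟨(AddMonoidHom.mulRight y).comp (f.1 : S →+ S), by
    intro r z
    show (f.1 : S →+ S) (ψ r * z) * y = ψ r * ((f.1 : S →+ S) z * y)
    rw [f.2 r z, mul_assoc]⟩

end ExtEnd


section TSqLemmas

variable {R S : Type} [Ring R] [Ring S] (ψ : R →+* S)

lemma tmk_add_left (x x' y : S) : tmk ψ (x + x') y = tmk ψ x y + tmk ψ x' y := by
  show QuotientAddGroup.mk _ = _
  rw [TensorProduct.add_tmul, QuotientAddGroup.mk_add]; rfl

lemma tmk_add_right (x y y' : S) : tmk ψ x (y + y') = tmk ψ x y + tmk ψ x y' := by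
  show QuotientAddGroup.mk _ = _
  rw [TensorProduct.tmul_add, QuotientAddGroup.mk_add]; rfl

lemma tmk_zero_left (y : S) : tmk ψ 0 y = 0 := by
  show QuotientAddGroup.mk _ = _
  rw [TensorProduct.zero_tmul, QuotientAddGroup.mk_zero]; rfl

lemma tmk_zero_right (x : S) : tmk ψ x 0 = 0 := by
  show QuotientAddGroup.mk _ = _
  rw [TensorProduct.tmul_zero, QuotientAddGroup.mk_zero]; rfl

lemma tL_tmk (a x y : S) : tL ψ a (tmk ψ x y) = tmk ψ (a * x) y := by
  show QuotientAddGroup.map _ _ _ _ (QuotientAddGroup.mk _) = _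
  rw [QuotientAddGroup.map_mk]
  simp only [LinearMap.toAddMonoidHom_coe, TensorProduct.map_tmul,
    AddMonoidHom.coe_toIntLinearMap, AddMonoidHom.coe_mulLeft, LinearMap.id_coe, id_eq]
  rfl

lemma tR_tmk (a x y : S) : tR ψ a (tmk ψ x y) = tmk ψ x (y * a) := by
  show QuotientAddGroup.map _ _ _ _ (QuotientAddGroup.mk _) = _
  rw [QuotientAddGroup.map_mk]
  simp only [LinearMap.toAddMonoidHom_coe, TensorProduct.map_tmul,
    AddMonoidHom.coe_toIntLinearMap, AddMonoidHom.coe_mulRight, LinearMap.id_coe, id_eq]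
  rfl

lemma tmul'_tmk (x y : S) : tmul' ψ (tmk ψ x y) = x * y := by
  show QuotientAddGroup.lift _ _ _ (QuotientAddGroup.mk _) = _
  rw [QuotientAddGroup.lift_mk]
  simp

lemma tmk_swap (x y : S) (r : R) : tmk ψ (x * ψ r) y = tmk ψ x (ψ r * y) := by
  show QuotientAddGroup.mk _ = QuotientAddGroup.mk _
  rw [QuotientAddGroup.eq]
  have h : (x * ψ r) ⊗ₜ[ℤ] y - x ⊗ₜ[ℤ] (ψ r * y) ∈ tensorRel ψ :=
    AddSubgroup.subset_closure ⟨x, y, r, rfl⟩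
  have := neg_mem h
  rwa [neg_sub, sub_eq_neg_add] at this

lemma TensorSq.ind {p : TensorSq ψ → Prop} (h0 : p 0)
    (hmk : ∀ x y, p (tmk ψ x y)) (hadd : ∀ a b, p a → p b → p (a + b)) :
    ∀ t, p t := by
  intro t
  obtain ⟨z, rfl⟩ := QuotientAddGroup.mk_surjective t
  induction z using TensorProduct.induction_on with
  | zero => rw [QuotientAddGroup.mk_zero]; exact h0
  | tmul x y => exact hmk x y
  | add a b ha hb => rw [QuotientAddGroup.mk_add]; exact hadd _ _ ha hb

lemma tmul'_tL (a : S) (t : TensorSq ψ) : tmul' ψ (tL ψ a t) = a * tmul' ψ t := by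
  induction t using TensorSq.ind with
  | h0 => simp [map_zero]
  | hmk x y => rw [tL_tmk, tmul'_tmk, tmul'_tmk, mul_assoc]
  | hadd u v hu hv => rw [map_add, map_add, map_add, mul_add, hu, hv]

lemma tmul'_tR (a : S) (t : TensorSq ψ) : tmul' ψ (tR ψ a t) = tmul' ψ t * a := by
  induction t using TensorSq.ind with
  | h0 => simp [map_zero]
  | hmk x y => rw [tR_tmk, tmul'_tmk, tmul'_tmk, mul_assoc]
  | hadd u v hu hv => rw [map_add, map_add, map_add, add_mul, hu, hv]

lemma tmk_sum_right {ι : Type*} (s : Finset ι) (x : S) (v : ι → S) :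
    tmk ψ x (∑ i ∈ s, v i) = ∑ i ∈ s, tmk ψ x (v i) := by
  classical
  induction s using Finset.induction_on with
  | empty => simp [tmk_zero_right]
  | insert _ _ hni ih =>
    rw [Finset.sum_insert hni, Finset.sum_insert hni, tmk_add_right, ih]

end TSqLemmas

section GroupD3

open MonoidAlgebra

variable {k : Type} [CommRing k] {G : Type} [Group G]

lemma mapdom_single {M N : Type} [Monoid M] [Monoid N] (f : M →* N) (x : M) (c : k) :
    MonoidAlgebra.mapDomainRingHom k f (MonoidAlgebra.single x c)
      = MonoidAlgebra.single (f x) c := by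
  simp [MonoidAlgebra.mapDomainRingHom]

lemma rmk_eq (H : Subgroup G) {x y : G} (h : y * x⁻¹ ∈ H) :
    Quotient.mk (QuotientGroup.rightRel H) x = Quotient.mk (QuotientGroup.rightRel H) y :=
  Quotient.sound (QuotientGroup.rightRel_apply.mpr h)

noncomputable def pihom (H : Subgroup G) (q : Quotient (QuotientGroup.rightRel H)) :
    MonoidAlgebra k G →+ MonoidAlgebra k G :=
  letI : DecidablePred (fun g : G => Quotient.mk (QuotientGroup.rightRel H) g = q) :=
    fun _ => Classical.dec _
  (MonoidAlgebra.coeffAddEquiv.symm.toAddMonoidHom).comp ((Finsupp.filterAddHom (fun g : G => Quotient.mk (QuotientGroup.rightRel H) g = q)).comp MonoidAlgebra.coeffAddEquiv.toAddMonoidHom)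

lemma pihom_single_of_eq (H : Subgroup G) {q} {g : G} (a : k)
    (h : Quotient.mk (QuotientGroup.rightRel H) g = q) :
    pihom H q (MonoidAlgebra.single g a) = MonoidAlgebra.single g a := by
  unfold pihom
  exact congrArg MonoidAlgebra.ofCoeff (@Finsupp.filter_single_of_pos G k _ _ (fun _ => Classical.dec _) _ _ h)

lemma pihom_single_of_ne (H : Subgroup G) {q} {g : G} (a : k)
    (h : ¬ Quotient.mk (QuotientGroup.rightRel H) g = q) :
    pihom H q (MonoidAlgebra.single g a) = 0 := by
  unfold pihom
  exact congrArg MonoidAlgebra.ofCoeff (@Finsupp.filter_single_of_neg G k _ _ (fun _ => Classical.dec _) _ _ h)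

lemma sum_pihom (H : Subgroup G) [Fintype (Quotient (QuotientGroup.rightRel H))]
    (y : MonoidAlgebra k G) : ∑ q, pihom (k := k) H q y = y := by
  classical
  induction y using MonoidAlgebra.induction_linear with
  | zero => simp
  | add f g hf hg => simp only [map_add, Finset.sum_add_distrib, hf, hg]
  | single g a =>
    rw [Finset.sum_congr rfl
      (fun q _ => show pihom H q (MonoidAlgebra.single g a)
          = if Quotient.mk (QuotientGroup.rightRel H) g = q then MonoidAlgebra.single g a
            else 0 by
        split
        · exact pihom_single_of_eq H a ‹_›
        · exact pihom_single_of_ne H a ‹_›)]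
    rw [Finset.sum_ite_eq]
    simp

variable {H K : Subgroup G}

lemma conj_mem_of_ncl (hncl : Subgroup.normalClosure (K : Set G) ≤ H) (g : G) {κ : G}
    (hκ : κ ∈ K) : g * κ * g⁻¹ ∈ H :=
  hncl (Subgroup.normalClosure_normal.conj_mem _ (Subgroup.subset_normalClosure hκ) g)

lemma pihom_mul_left (q) (b : MonoidAlgebra k H) (y : MonoidAlgebra k G) :
    pihom H q (mapDomainRingHom k H.subtype b * y)
      = mapDomainRingHom k H.subtype b * pihom H q y := by
  induction b using MonoidAlgebra.induction_linear with
  | zero => simp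
  | add f g hf hg => simp only [map_add, add_mul, hf, hg]
  | single h c =>
    induction y using MonoidAlgebra.induction_linear with
    | zero => simp
    | add f g hf hg => simp only [map_add, mul_add, hf, hg]
    | single g a =>
      rw [mapdom_single, Subgroup.coe_subtype, single_mul_single]
      have hq : Quotient.mk (QuotientGroup.rightRel H) (↑h * g)
          = Quotient.mk (QuotientGroup.rightRel H) g :=
        (rmk_eq H (by simpa using h.2)).symm
      by_cases hg : Quotient.mk (QuotientGroup.rightRel H) g = q
      · rw [pihom_single_of_eq H _ (hq.trans hg), pihom_single_of_eq H _ hg,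
          single_mul_single]
      · rw [pihom_single_of_ne H _ (fun hh => hg (hq ▸ hh)), pihom_single_of_ne H _ hg,
          mul_zero]

lemma pihom_mul_right (hncl : Subgroup.normalClosure (K : Set G) ≤ H)
    (q) (y : MonoidAlgebra k G) (c : MonoidAlgebra k K) :
    pihom H q (y * mapDomainRingHom k K.subtype c)
      = pihom H q y * mapDomainRingHom k K.subtype c := by
  induction c using MonoidAlgebra.induction_linear with
  | zero => simp
  | add f g hf hg => simp only [map_add, mul_add, hf, hg]
  | single κ b =>
    induction y using MonoidAlgebra.induction_linear with
    | zero => simp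
    | add f g hf hg => simp only [map_add, add_mul, hf, hg]
    | single g a =>
      rw [mapdom_single, Subgroup.coe_subtype, single_mul_single]
      have hq : Quotient.mk (QuotientGroup.rightRel H) (g * ↑κ)
          = Quotient.mk (QuotientGroup.rightRel H) g :=
        (rmk_eq H (conj_mem_of_ncl hncl g κ.2)).symm
      by_cases hg : Quotient.mk (QuotientGroup.rightRel H) g = q
      · rw [pihom_single_of_eq H _ (hq.trans hg), pihom_single_of_eq H _ hg,
          single_mul_single]
      · rw [pihom_single_of_ne H _ (fun hh => hg (hq ▸ hh)), pihom_single_of_ne H _ hg,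
          zero_mul]

lemma pihom_decomp (q) (y : MonoidAlgebra k G) :
    ∃ b : MonoidAlgebra k H,
      pihom H q y = mapDomainRingHom k H.subtype b * of k G q.out := by
  induction y using MonoidAlgebra.induction_linear with
  | zero => exact ⟨0, by simp⟩
  | add f g hf hg =>
    obtain ⟨b1, hb1⟩ := hf; obtain ⟨b2, hb2⟩ := hg
    exact ⟨b1 + b2, by rw [map_add, hb1, hb2, map_add, add_mul]⟩
  | single g a =>
    by_cases hg : Quotient.mk (QuotientGroup.rightRel H) g = q
    · have hmem : g * q.out⁻¹ ∈ H := by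
        have h1 : Quotient.mk (QuotientGroup.rightRel H) q.out
            = Quotient.mk (QuotientGroup.rightRel H) g := (q.out_eq).trans hg.symm
        have := QuotientGroup.rightRel_apply.mp (Quotient.exact h1)
        exact this
      refine ⟨MonoidAlgebra.single ⟨g * q.out⁻¹, hmem⟩ a, ?_⟩
      rw [pihom_single_of_eq H _ hg, mapdom_single]
      rw [Subgroup.coe_subtype]
      show _ = _ * MonoidAlgebra.single q.out 1
      rw [single_mul_single]
      simp
    · exact ⟨0, by rw [pihom_single_of_ne H _ hg]; simp⟩

lemma conj_comm_pair (hncl : Subgroup.normalClosure (K : Set G) ≤ H) (g : G)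
    (c : MonoidAlgebra k K) :
    ∃ b : MonoidAlgebra k H,
      of k G g * mapDomainRingHom k K.subtype c
          = mapDomainRingHom k H.subtype b * of k G g
      ∧ mapDomainRingHom k K.subtype c * of k G g⁻¹
          = of k G g⁻¹ * mapDomainRingHom k H.subtype b := by
  induction c using MonoidAlgebra.induction_linear with
  | zero => exact ⟨0, by simp⟩
  | add f g hf hg =>
    obtain ⟨b1, hb1, hb1'⟩ := hf; obtain ⟨b2, hb2, hb2'⟩ := hg
    exact ⟨b1 + b2, by rw [map_add, mul_add, hb1, hb2, map_add, add_mul],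
      by rw [map_add, add_mul, hb1', hb2', map_add, mul_add]⟩
  | single κ a =>
    refine ⟨MonoidAlgebra.single ⟨g * ↑κ * g⁻¹, conj_mem_of_ncl hncl g κ.2⟩ a, ?_, ?_⟩
    · rw [mapdom_single, mapdom_single]
      rw [Subgroup.coe_subtype]
      show MonoidAlgebra.single g 1 * _ = _ * MonoidAlgebra.single g 1
      rw [single_mul_single, single_mul_single]
      simp [mul_assoc]
    · rw [mapdom_single, mapdom_single]
      rw [Subgroup.coe_subtype]
      show _ * MonoidAlgebra.single g⁻¹ 1 = MonoidAlgebra.single g⁻¹ 1 * _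
      rw [single_mul_single, single_mul_single]
      simp [mul_assoc]

lemma psiC_mem_range (hKH : K ≤ H) (c : MonoidAlgebra k K) :
    ∃ b : MonoidAlgebra k H,
      mapDomainRingHom k K.subtype c = mapDomainRingHom k H.subtype b := by
  refine ⟨mapDomainRingHom k (Subgroup.inclusion hKH) c, ?_⟩
  induction c using MonoidAlgebra.induction_linear with
  | zero => simp
  | add f g hf hg => rw [map_add, map_add, map_add, hf, hg]
  | single x a => rw [mapdom_single, mapdom_single, mapdom_single]; rfl

noncomputable def fbil (H : Subgroup G) :
    MonoidAlgebra k G →ₗ[ℤ] MonoidAlgebra k G →ₗ[ℤ]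
      (Quotient (QuotientGroup.rightRel H) → MonoidAlgebra k G) :=
  LinearMap.mk₂ ℤ (fun x y q => x * pihom H q y)
    (fun x x' y => by funext q; exact add_mul x x' _)
    (fun c x y => by funext q; exact smul_mul_assoc c x _)
    (fun x y y' => by
      funext q
      show x * pihom H q (y + y') = x * pihom H q y + x * pihom H q y'
      rw [map_add, mul_add])
    (fun c x y => by
      funext q
      show x * pihom H q (c • y) = c • (x * pihom H q y)
      rw [AddMonoidHom.map_zsmul, mul_smul_comm])

noncomputable def fmap (H : Subgroup G) :
    TensorSq (mapDomainRingHom k H.subtype : MonoidAlgebra k H →+* MonoidAlgebra k G) →+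
      (Quotient (QuotientGroup.rightRel H) → MonoidAlgebra k G) :=
  QuotientAddGroup.lift _ (TensorProduct.lift (fbil H)).toAddMonoidHom (by
    intro z hz
    induction hz using AddSubgroup.closure_induction with
    | mem z hz =>
      obtain ⟨x, y, r, rfl⟩ := hz
      rw [AddMonoidHom.mem_ker]
      simp only [LinearMap.toAddMonoidHom_coe, map_sub, TensorProduct.lift.tmul]
      rw [sub_eq_zero]
      funext q
      show x * mapDomainRingHom k H.subtype r * pihom H q y
        = x * pihom H q (mapDomainRingHom k H.subtype r * y)
      rw [pihom_mul_left, mul_assoc]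
    | zero => exact zero_mem _
    | add a b _ _ ha hb => exact add_mem ha hb
    | neg a _ ha => exact neg_mem ha)

lemma fmap_tmk (H : Subgroup G) (x y : MonoidAlgebra k G) :
    fmap H (tmk (mapDomainRingHom k H.subtype) x y) = fun q => x * pihom H q y := by
  show QuotientAddGroup.lift _ _ _ (QuotientAddGroup.mk _) = _
  rw [QuotientAddGroup.lift_mk]
  simp only [LinearMap.toAddMonoidHom_coe, TensorProduct.lift.tmul]
  rfl

lemma fmap_tmk' (H : Subgroup G) (x y : MonoidAlgebra k G) (q) :
    fmap H (tmk (mapDomainRingHom k H.subtype) x y) q = x * pihom H q y :=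
  congrFun (fmap_tmk H x y) q

lemma fmap_tL (H : Subgroup G) (a : MonoidAlgebra k G)
    (t : TensorSq (mapDomainRingHom k H.subtype : MonoidAlgebra k H →+* MonoidAlgebra k G))
    (q) : fmap H (tL (mapDomainRingHom k H.subtype) a t) q = a * fmap H t q := by
  induction t using TensorSq.ind with
  | h0 => simp [map_zero]
  | hmk x y => rw [tL_tmk, fmap_tmk', fmap_tmk', mul_assoc]
  | hadd u v hu hv =>
    rw [map_add, map_add, map_add, Pi.add_apply, Pi.add_apply, hu, hv, mul_add]

lemma fmap_tR (hncl : Subgroup.normalClosure (K : Set G) ≤ H) (c : MonoidAlgebra k K)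
    (t : TensorSq (mapDomainRingHom k H.subtype : MonoidAlgebra k H →+* MonoidAlgebra k G))
    (q) : fmap H (tR (mapDomainRingHom k H.subtype) (mapDomainRingHom k K.subtype c) t) q
      = fmap H t q * mapDomainRingHom k K.subtype c := by
  induction t using TensorSq.ind with
  | h0 => simp [map_zero]
  | hmk x y =>
    rw [tR_tmk, fmap_tmk', fmap_tmk', pihom_mul_right hncl, mul_assoc]
  | hadd u v hu hv =>
    rw [map_add, map_add, map_add, Pi.add_apply, Pi.add_apply, hu, hv, add_mul]

end GroupD3

open MonoidAlgebra in
/-- Let `K ≤ H ≤ G` be finite groups with the normal closure of `K` in `G` contained in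
`H`, and let `A = k[G]`, `B = k[H]`, `C = k[K]` be the group algebras over a commutative
ring `k`. Then the tower `A/B/C` is right depth three: `A ⊗_B A ∼ A` as
`(A,C)`-bimodules (the right `C`-action being via `k[K] → k[G]`). -/
theorem groupAlgebra_tower_rightD3 (k : Type) [CommRing k] (G : Type) [Group G]
    [Finite G] (H K : Subgroup G) (hKH : K ≤ H)
    (hncl : Subgroup.normalClosure (K : Set G) ≤ H) :
    BSim (MonoidAlgebra k G) (MonoidAlgebra k ↥K)
      (fun a x => a * x)
      (fun x c => x * MonoidAlgebra.mapDomainRingHom k K.subtype c)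
      (fun a t => tL (MonoidAlgebra.mapDomainRingHom k H.subtype) a t)
      (fun t c => tR (MonoidAlgebra.mapDomainRingHom k H.subtype)
        (MonoidAlgebra.mapDomainRingHom k K.subtype c) t) := by
  classical
  have psi := (MonoidAlgebra.mapDomainRingHom k H.subtype :
    MonoidAlgebra k ↥H →+* MonoidAlgebra k G)
  constructor
  · -- A divides A ⊗_B A
    refine ⟨1,
      AddMonoidHom.mk' (fun a => fun _ : Fin 1 => tmk (MonoidAlgebra.mapDomainRingHom k H.subtype) a 1)
        (fun a b => by funext i; exact tmk_add_left _ a b 1),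
      (tmul' (MonoidAlgebra.mapDomainRingHom k H.subtype)).comp (Pi.evalAddMonoidHom (fun _ : Fin 1 => TensorSq (MonoidAlgebra.mapDomainRingHom k H.subtype)) 0),
      ?_, ?_, ?_, ?_, ?_⟩
    · intro l m
      funext i
      show tmk (MonoidAlgebra.mapDomainRingHom k H.subtype) (l * m) 1 = tL (MonoidAlgebra.mapDomainRingHom k H.subtype) l (tmk (MonoidAlgebra.mapDomainRingHom k H.subtype) m 1)
      rw [tL_tmk]
    · intro m c
      funext i
      show tmk (MonoidAlgebra.mapDomainRingHom k H.subtype) (m * (MonoidAlgebra.mapDomainRingHom k K.subtype c)) 1 = tR (MonoidAlgebra.mapDomainRingHom k H.subtype) ((MonoidAlgebra.mapDomainRingHom k K.subtype c)) (tmk (MonoidAlgebra.mapDomainRingHom k H.subtype) m 1)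
      obtain ⟨b, hb⟩ := psiC_mem_range hKH c
      rw [tR_tmk, hb, tmk_swap, mul_one, one_mul]
    · intro l v
      show tmul' (MonoidAlgebra.mapDomainRingHom k H.subtype) (tL (MonoidAlgebra.mapDomainRingHom k H.subtype) l (v 0)) = l * tmul' (MonoidAlgebra.mapDomainRingHom k H.subtype) (v 0)
      exact tmul'_tL (MonoidAlgebra.mapDomainRingHom k H.subtype) l (v 0)
    · intro v c
      show tmul' (MonoidAlgebra.mapDomainRingHom k H.subtype) (tR (MonoidAlgebra.mapDomainRingHom k H.subtype) ((MonoidAlgebra.mapDomainRingHom k K.subtype c)) (v 0)) = tmul' (MonoidAlgebra.mapDomainRingHom k H.subtype) (v 0) * (MonoidAlgebra.mapDomainRingHom k K.subtype c)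
      exact tmul'_tR (MonoidAlgebra.mapDomainRingHom k H.subtype) ((MonoidAlgebra.mapDomainRingHom k K.subtype c)) (v 0)
    · intro m
      show tmul' (MonoidAlgebra.mapDomainRingHom k H.subtype) (tmk (MonoidAlgebra.mapDomainRingHom k H.subtype) m 1) = m
      rw [tmul'_tmk, mul_one]
  · -- A ⊗_B A divides Aⁿ
    haveI : Fintype (Quotient (QuotientGroup.rightRel H)) := Fintype.ofFinite _
    set e : Fin (Fintype.card (Quotient (QuotientGroup.rightRel H)))
        ≃ Quotient (QuotientGroup.rightRel H) :=
      (Fintype.equivFin (Quotient (QuotientGroup.rightRel H))).symm with he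
    refine ⟨Fintype.card (Quotient (QuotientGroup.rightRel H)),
      AddMonoidHom.mk' (fun t i => fmap H t (e i))
        (fun s t => by
          funext i
          show fmap H (s + t) (e i) = fmap H s (e i) + fmap H t (e i)
          rw [map_add]; rfl),
      AddMonoidHom.mk'
        (fun v => ∑ i, tmk (MonoidAlgebra.mapDomainRingHom k H.subtype) (v i * MonoidAlgebra.of k G ((e i).out⁻¹))
          (MonoidAlgebra.of k G (e i).out))
        (fun v w => by
          rw [← Finset.sum_add_distrib]
          exact Finset.sum_congr rfl fun i _ => by
            rw [Pi.add_apply, add_mul, tmk_add_left]),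
      ?_, ?_, ?_, ?_, ?_⟩
    · intro a t
      funext i
      show fmap H (tL (MonoidAlgebra.mapDomainRingHom k H.subtype) a t) (e i) = a * fmap H t (e i)
      exact fmap_tL H a t (e i)
    · intro t c
      funext i
      show fmap H (tR (MonoidAlgebra.mapDomainRingHom k H.subtype) ((MonoidAlgebra.mapDomainRingHom k K.subtype c)) t) (e i) = fmap H t (e i) * (MonoidAlgebra.mapDomainRingHom k K.subtype c)
      exact fmap_tR hncl c t (e i)
    · intro a v
      show (∑ i, tmk (MonoidAlgebra.mapDomainRingHom k H.subtype) ((a * v i) * MonoidAlgebra.of k G ((e i).out⁻¹))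
          (MonoidAlgebra.of k G (e i).out))
        = tL (MonoidAlgebra.mapDomainRingHom k H.subtype) a (∑ i, tmk (MonoidAlgebra.mapDomainRingHom k H.subtype) (v i * MonoidAlgebra.of k G ((e i).out⁻¹))
          (MonoidAlgebra.of k G (e i).out))
      rw [map_sum]
      refine Finset.sum_congr rfl fun i _ => ?_
      rw [tL_tmk, mul_assoc]
    · intro v c
      show (∑ i, tmk (MonoidAlgebra.mapDomainRingHom k H.subtype) ((v i * (MonoidAlgebra.mapDomainRingHom k K.subtype c)) * MonoidAlgebra.of k G ((e i).out⁻¹))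
          (MonoidAlgebra.of k G (e i).out))
        = tR (MonoidAlgebra.mapDomainRingHom k H.subtype) ((MonoidAlgebra.mapDomainRingHom k K.subtype c)) (∑ i, tmk (MonoidAlgebra.mapDomainRingHom k H.subtype) (v i * MonoidAlgebra.of k G ((e i).out⁻¹))
          (MonoidAlgebra.of k G (e i).out))
      rw [map_sum]
      refine Finset.sum_congr rfl fun i _ => ?_
      obtain ⟨b, hb1, hb2⟩ := conj_comm_pair hncl (e i).out c
      rw [tR_tmk, hb1, ← tmk_swap, mul_assoc, hb2, ← mul_assoc]
    · have key : ∀ x y : MonoidAlgebra k G,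
          (∑ i, tmk (MonoidAlgebra.mapDomainRingHom k H.subtype) (fmap H (tmk (MonoidAlgebra.mapDomainRingHom k H.subtype) x y) (e i) * MonoidAlgebra.of k G ((e i).out⁻¹))
            (MonoidAlgebra.of k G (e i).out)) = tmk (MonoidAlgebra.mapDomainRingHom k H.subtype) x y := by
        intro x y
        have step : ∀ q : Quotient (QuotientGroup.rightRel H),
            tmk (MonoidAlgebra.mapDomainRingHom k H.subtype) (x * pihom H q y * MonoidAlgebra.of k G (q.out⁻¹))
                (MonoidAlgebra.of k G q.out)
              = tmk (MonoidAlgebra.mapDomainRingHom k H.subtype) x (pihom H q y) := by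
          intro q
          obtain ⟨b, hb⟩ := pihom_decomp q y
          have hone : MonoidAlgebra.of k G q.out * MonoidAlgebra.of k G (q.out⁻¹) = 1 := by
            rw [← map_mul, mul_inv_cancel, map_one]
          rw [hb, ← mul_assoc x (MonoidAlgebra.mapDomainRingHom k H.subtype b) (MonoidAlgebra.of k G q.out),
            mul_assoc (x * MonoidAlgebra.mapDomainRingHom k H.subtype b) (MonoidAlgebra.of k G q.out)
              (MonoidAlgebra.of k G (q.out⁻¹)),
            hone, mul_one, tmk_swap]
        calc (∑ i, tmk (MonoidAlgebra.mapDomainRingHom k H.subtype) (fmap H (tmk (MonoidAlgebra.mapDomainRingHom k H.subtype) x y) (e i) * MonoidAlgebra.of k G ((e i).out⁻¹))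
            (MonoidAlgebra.of k G (e i).out))
            = ∑ i, tmk (MonoidAlgebra.mapDomainRingHom k H.subtype) x (pihom H (e i) y) := by
              refine Finset.sum_congr rfl fun i _ => ?_
              rw [fmap_tmk']
              exact step (e i)
          _ = tmk (MonoidAlgebra.mapDomainRingHom k H.subtype) x (∑ i, pihom H (e i) y) := by rw [tmk_sum_right]
          _ = tmk (MonoidAlgebra.mapDomainRingHom k H.subtype) x y := by rw [Equiv.sum_comp e (fun q => pihom H q y), sum_pihom]
      intro t
      induction t using TensorSq.ind with
      | h0 =>
        show (∑ i, tmk (MonoidAlgebra.mapDomainRingHom k H.subtype) (fmap H 0 (e i) * MonoidAlgebra.of k G ((e i).out⁻¹))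
            (MonoidAlgebra.of k G (e i).out)) = (0 : TensorSq (MonoidAlgebra.mapDomainRingHom k H.subtype))
        rw [map_zero]
        refine Finset.sum_eq_zero fun i _ => ?_
        rw [Pi.zero_apply, zero_mul, tmk_zero_left]
      | hmk x y => exact key x y
      | hadd u w hu hw =>
        show (∑ i, tmk (MonoidAlgebra.mapDomainRingHom k H.subtype) (fmap H (u + w) (e i) * MonoidAlgebra.of k G ((e i).out⁻¹))
            (MonoidAlgebra.of k G (e i).out)) = u + w
        rw [map_add]
        rw [Finset.sum_congr rfl (fun i _ => by
          rw [Pi.add_apply, add_mul, tmk_add_left]), Finset.sum_add_distrib]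
        exact congrArg₂ (· + ·) hu hw
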